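/- Let G be a nut graph and let e = {u, v} be an edge of G. Then the graph obtained from G by subdividing the edge e four times (replacing e by a path u — a₁ — a₂ — a₃ — a₄ — v through four new vertices) is again a nut graph. -/

import Mathlib

open scoped Classical

/-- A *nut graph*: a finite simple graph on at least 2 vertices whose real adjacency
matrix has nullity (kernel dimension) exactly 1 and such that every nonzero vector in
the kernel of the adjacency matrix has all entries nonzero. -/
def SimpleGraph.IsNut {V : Type*} [Fintype V] (G : SimpleGraph V) : Prop :=
  2 ≤ Fintype.card V ∧
  Module.finrank ℝ (LinearMap.ker (Matrix.mulVecLin (G.adjMatrix ℝ))) = 1 ∧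
  ∀ x : V → ℝ, Matrix.mulVecLin (G.adjMatrix ℝ) x = 0 → x ≠ 0 → ∀ v : V, x v ≠ 0

/-- The automorphism group of a simple graph, realised as the subgroup of the
permutations of the vertex set that preserve adjacency (and non-adjacency). -/
def SimpleGraph.autGroup {V : Type*} (G : SimpleGraph V) : Subgroup (Equiv.Perm V) where
  carrier := { σ | ∀ u v : V, G.Adj (σ u) (σ v) ↔ G.Adj u v }
  mul_mem' := by
    intro σ τ hσ hτ u v
    simpa [hσ (τ u) (τ v)] using hτ u v
  one_mem' := by intro u v; rfl
  inv_mem' := by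
    intro σ hσ u v
    have := hσ (σ⁻¹ u) (σ⁻¹ v)
    simpa using this.symm

/-- The graph obtained from `G` by subdividing the edge `{u, v}` four times: the edge
`{u, v}` is replaced by the path `u — 0 — 1 — 2 — 3 — v` through four new vertices. -/
def SimpleGraph.subdivideFour {V : Type*} (G : SimpleGraph V) (u v : V) :
    SimpleGraph (V ⊕ Fin 4) where
  Adj x y :=
    match x, y with
    | Sum.inl a, Sum.inl b => G.Adj a b ∧ ¬((a = u ∧ b = v) ∨ (a = v ∧ b = u))
    | Sum.inl a, Sum.inr i => (a = u ∧ i = 0) ∨ (a = v ∧ i = 3)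
    | Sum.inr i, Sum.inl a => (a = u ∧ i = 0) ∨ (a = v ∧ i = 3)
    | Sum.inr i, Sum.inr j => (i : ℕ) + 1 = (j : ℕ) ∨ (j : ℕ) + 1 = (i : ℕ)
  symm := by
    constructor
    rintro (a | i) (b | j) h
    · exact ⟨G.adj_symm h.1, fun hc => h.2 (by tauto)⟩
    · exact h
    · exact h
    · exact h.symm
  loopless := by
    constructor
    rintro (a | i) h
    · exact G.irrefl h.1
    · omega
  

section SubdivAux

open Matrix SimpleGraph

variable {V : Type*} [Fintype V] {G : SimpleGraph V} {u v : V}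

private lemma sd_mv_inr0 (y : V ⊕ Fin 4 → ℝ) :
    ((G.subdivideFour u v).adjMatrix ℝ).mulVec y (Sum.inr 0) =
      y (Sum.inl u) + y (Sum.inr 1) := by
  have h3 : ((3:Fin 4):ℕ) = 3 := rfl
  have h2 : ((2:Fin 4):ℕ) = 2 := rfl
  have h1 : ((1:Fin 4):ℕ) = 1 := rfl
  have h0 : ((0:Fin 4):ℕ) = 0 := rfl
  simp [Matrix.mulVec, dotProduct, ite_mul, Fintype.sum_sum_type,
    SimpleGraph.subdivideFour, Fin.sum_univ_four, Finset.sum_ite_eq', h0,h1,h2,h3]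

private lemma sd_mv_inr1 (y : V ⊕ Fin 4 → ℝ) :
    ((G.subdivideFour u v).adjMatrix ℝ).mulVec y (Sum.inr 1) =
      y (Sum.inr 0) + y (Sum.inr 2) := by
  have h3 : ((3:Fin 4):ℕ) = 3 := rfl
  have h2 : ((2:Fin 4):ℕ) = 2 := rfl
  have h1 : ((1:Fin 4):ℕ) = 1 := rfl
  have h0 : ((0:Fin 4):ℕ) = 0 := rfl
  simp [Matrix.mulVec, dotProduct, ite_mul, Fintype.sum_sum_type,
    SimpleGraph.subdivideFour, Fin.sum_univ_four, Finset.sum_ite_eq', h0,h1,h2,h3]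

private lemma sd_mv_inr2 (y : V ⊕ Fin 4 → ℝ) :
    ((G.subdivideFour u v).adjMatrix ℝ).mulVec y (Sum.inr 2) =
      y (Sum.inr 1) + y (Sum.inr 3) := by
  have h3 : ((3:Fin 4):ℕ) = 3 := rfl
  have h2 : ((2:Fin 4):ℕ) = 2 := rfl
  have h1 : ((1:Fin 4):ℕ) = 1 := rfl
  have h0 : ((0:Fin 4):ℕ) = 0 := rfl
  simp [Matrix.mulVec, dotProduct, ite_mul, Fintype.sum_sum_type,
    SimpleGraph.subdivideFour, Fin.sum_univ_four, Finset.sum_ite_eq', h0,h1,h2,h3]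

private lemma sd_mv_inr3 (y : V ⊕ Fin 4 → ℝ) :
    ((G.subdivideFour u v).adjMatrix ℝ).mulVec y (Sum.inr 3) =
      y (Sum.inl v) + y (Sum.inr 2) := by
  have h3 : ((3:Fin 4):ℕ) = 3 := rfl
  have h2 : ((2:Fin 4):ℕ) = 2 := rfl
  have h1 : ((1:Fin 4):ℕ) = 1 := rfl
  have h0 : ((0:Fin 4):ℕ) = 0 := rfl
  simp [Matrix.mulVec, dotProduct, ite_mul, Fintype.sum_sum_type,
    SimpleGraph.subdivideFour, Fin.sum_univ_four, Finset.sum_ite_eq', h0,h1,h2,h3]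

private lemma sd_sum_erase {p q : V} (hpq : G.Adj p q) (x : V → ℝ) :
    (∑ a : V, if G.Adj p a ∧ ¬ a = q then x a else 0)
      = (∑ a : V, if G.Adj p a then x a else 0) - x q := by
  have key : ∀ a : V, (if G.Adj p a then x a else 0)
      = (if G.Adj p a ∧ ¬ a = q then x a else 0) + (if a = q then x a else 0) := by
    intro a
    by_cases h1 : a = q
    · subst h1; simp [hpq]
    · simp [h1]
  have h2 : (∑ a : V, if G.Adj p a then x a else 0)
      = (∑ a : V, if G.Adj p a ∧ ¬ a = q then x a else 0)
        + ∑ a : V, if a = q then x a else 0 := by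
    rw [← Finset.sum_add_distrib]
    exact Finset.sum_congr rfl fun a _ => key a
  rw [h2, Finset.sum_ite_eq']
  simp

private lemma sd_mv_inl (hne : u ≠ v) (he : G.Adj u v) (y : V ⊕ Fin 4 → ℝ) (w : V) :
    ((G.subdivideFour u v).adjMatrix ℝ).mulVec y (Sum.inl w) =
      (G.adjMatrix ℝ).mulVec (fun a => y (Sum.inl a)) w
        + (if w = u then y (Sum.inr 0) - y (Sum.inl v) else 0)
        + (if w = v then y (Sum.inr 3) - y (Sum.inl u) else 0) := by
  have h30 : ((3:Fin 4) = 0) = False := by simp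
  have h03 : ((0:Fin 4) = 3) = False := by simp
  have h10 : ((1:Fin 4) = 0) = False := by simp
  have h13 : ((1:Fin 4) = 3) = False := by simp
  have h20 : ((2:Fin 4) = 0) = False := by simp
  have h23 : ((2:Fin 4) = 3) = False := by simp
  by_cases hwu : w = u
  · subst hwu
    have hwv : ¬ w = v := hne
    simp only [Matrix.mulVec, dotProduct, SimpleGraph.adjMatrix_apply]
    simp only [Matrix.mulVec, dotProduct, SimpleGraph.adjMatrix_apply, ite_mul,
      one_mul, zero_mul, Fintype.sum_sum_type, SimpleGraph.subdivideFour,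
      Fin.sum_univ_four, h30, h03, h10, h13, h20, h23, hwv, hne,
      and_true, and_false, false_or, or_false, if_true, if_false, eq_self_iff_true,
      not_false_iff, false_and, true_and]
    rw [sd_sum_erase he]
    simp [hne]
    ring
  · by_cases hwv : w = v
    · subst hwv
      simp only [Matrix.mulVec, dotProduct, SimpleGraph.adjMatrix_apply]
      simp only [Matrix.mulVec, dotProduct, SimpleGraph.adjMatrix_apply, ite_mul,
        one_mul, zero_mul, Fintype.sum_sum_type, SimpleGraph.subdivideFour,
        Fin.sum_univ_four, h30, h03, h10, h13, h20, h23, hwu,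
        and_true, and_false, false_or, or_false, if_true, if_false, eq_self_iff_true,
        not_false_iff, false_and, true_and]
      rw [sd_sum_erase he.symm]
      simp [hwu]
      ring
    · simp only [Matrix.mulVec, dotProduct, SimpleGraph.adjMatrix_apply, ite_mul,
        one_mul, zero_mul, Fintype.sum_sum_type, SimpleGraph.subdivideFour,
        Fin.sum_univ_four, h30, h03, h10, h13, h20, h23, hwu, hwv,
        and_true, and_false, false_or, or_false, if_true, if_false, eq_self_iff_true,
        not_false_iff, false_and, true_and]
      simp [hwu, hwv]

private lemma sd_fin4 (i : Fin 4) : i = 0 ∨ i = 1 ∨ i = 2 ∨ i = 3 := by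
  fin_cases i <;> simp

private lemma sd_ker_iff (hne : u ≠ v) (he : G.Adj u v) (y : V ⊕ Fin 4 → ℝ) :
    Matrix.mulVecLin ((G.subdivideFour u v).adjMatrix ℝ) y = 0 ↔
      (Matrix.mulVecLin (G.adjMatrix ℝ) (fun a => y (Sum.inl a)) = 0 ∧
       y (Sum.inr 0) = y (Sum.inl v) ∧ y (Sum.inr 1) = -y (Sum.inl u) ∧
       y (Sum.inr 2) = -y (Sum.inl v) ∧ y (Sum.inr 3) = y (Sum.inl u)) := by
  simp only [Matrix.mulVecLin_apply, funext_iff, Pi.zero_apply]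
  constructor
  · intro hy
    have e0 := hy (Sum.inr 0); rw [sd_mv_inr0] at e0
    have e1 := hy (Sum.inr 1); rw [sd_mv_inr1] at e1
    have e2 := hy (Sum.inr 2); rw [sd_mv_inr2] at e2
    have e3 := hy (Sum.inr 3); rw [sd_mv_inr3] at e3
    have h1 : y (Sum.inr 1) = -y (Sum.inl u) := by linarith
    have h2 : y (Sum.inr 2) = -y (Sum.inl v) := by linarith
    have h0 : y (Sum.inr 0) = y (Sum.inl v) := by linarith
    have h3 : y (Sum.inr 3) = y (Sum.inl u) := by linarith
    refine ⟨fun w => ?_, h0, h1, h2, h3⟩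
    have hw := hy (Sum.inl w); rw [sd_mv_inl hne he] at hw
    by_cases hwu : w = u <;> by_cases hwv : w = v <;>
      simp only [hwu, hwv, if_true, if_false, if_neg, eq_self_iff_true] at hw <;>
      simp_all <;> linarith
  · rintro ⟨hker, h0, h1, h2, h3⟩ z
    cases z with
    | inl w =>
      rw [sd_mv_inl hne he]
      have := hker w
      by_cases hwu : w = u <;> by_cases hwv : w = v <;>
        simp_all <;> linarith
    | inr i =>
      rcases sd_fin4 i with rfl | rfl | rfl | rfl
      · rw [sd_mv_inr0, h1]; ring
      · rw [sd_mv_inr1, h0, h2]; ring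
      · rw [sd_mv_inr2, h1, h3]; ring
      · rw [sd_mv_inr3, h2]; ring

end SubdivAux

/-- Subdividing an edge of a nut graph four times yields a nut graph. -/
theorem subdivideFour_isNut {V : Type*} [Fintype V] (G : SimpleGraph V) (u v : V)
    (he : G.Adj u v) (h : G.IsNut) :
    (G.subdivideFour u v).IsNut := by
  have hne : u ≠ v := he.ne
  obtain ⟨hcard, hrank, hsupp⟩ := h
  refine ⟨?_, ?_, ?_⟩
  · simp only [Fintype.card_sum, Fintype.card_fin]
    omega
  · -- build a linear equivalence between the two kernels
    let E : (V → ℝ) → (V ⊕ Fin 4 → ℝ) := fun x z =>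
      Sum.rec x (fun i => if i = 0 then x v else if i = 1 then -x u
        else if i = 2 then -x v else x u) z
    have hEmem : ∀ x : V → ℝ, Matrix.mulVecLin (G.adjMatrix ℝ) x = 0 →
        Matrix.mulVecLin ((G.subdivideFour u v).adjMatrix ℝ) (E x) = 0 := by
      intro x hx
      rw [sd_ker_iff hne he]
      refine ⟨?_, by simp [E], by simp [E], by simp [E], by simp [E]⟩
      exact hx
    let e : LinearMap.ker (Matrix.mulVecLin ((G.subdivideFour u v).adjMatrix ℝ)) ≃ₗ[ℝ]
        LinearMap.ker (Matrix.mulVecLin (G.adjMatrix ℝ)) :=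
      { toFun := fun y => ⟨fun a => y.1 (Sum.inl a),
          ((sd_ker_iff hne he y.1).mp y.2).1⟩
        map_add' := fun _ _ => rfl
        map_smul' := fun _ _ => rfl
        invFun := fun x => ⟨E x.1, hEmem x.1 x.2⟩
        left_inv := by
          rintro ⟨y, hy⟩
          obtain ⟨hker, h0, h1, h2, h3⟩ := (sd_ker_iff hne he y).mp hy
          apply Subtype.ext
          funext z
          cases z with
          | inl a => rfl
          | inr i =>
            rcases sd_fin4 i with rfl | rfl | rfl | rfl
            · simpa [E] using h0.symm
            · simpa [E] using h1.symm
            · simpa [E] using h2.symm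
            · simpa [E] using h3.symm
        right_inv := by
          rintro ⟨x, hx⟩
          apply Subtype.ext
          funext a
          rfl }
    rw [LinearEquiv.finrank_eq e, hrank]
  · intro y hy hy0
    obtain ⟨hker, h0, h1, h2, h3⟩ := (sd_ker_iff hne he y).mp hy
    have hx0 : (fun a => y (Sum.inl a)) ≠ 0 := by
      intro hx
      apply hy0
      funext z
      cases z with
      | inl a => exact congrFun hx a
      | inr i =>
        have hxu : y (Sum.inl u) = 0 := congrFun hx u
        have hxv : y (Sum.inl v) = 0 := congrFun hx v
        show y (Sum.inr i) = 0
        rcases sd_fin4 i with rfl | rfl | rfl | rfl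
        · rw [h0, hxv]
        · rw [h1, hxu]; ring
        · rw [h2, hxv]; ring
        · rw [h3, hxu]
    have hall := hsupp _ hker hx0
    intro z
    cases z with
    | inl a => exact hall a
    | inr i =>
      rcases sd_fin4 i with rfl | rfl | rfl | rfl
      · rw [h0]; exact hall v
      · rw [h1]; simpa using hall u
      · rw [h2]; simpa using hall v
      · rw [h3]; exact hall u
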